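/- Fix constants c₀ > 0 and c > 0, and let 1 ≤ p < q ≤ 2 with q − p ≥ c. There exists a constant C > 0, depending only on c₀ and c, such that the following holds. Let a_1, …, a_m be non-negative reals with ∑_{j=1}^m a_j^p ≤ 1, and let Ẑ_1, …, Ẑ_m be real random variables on a common probability space (not necessarily independent) such that for every j and every λ ≥ 1, P(|Ẑ_j| ≥ λ) ≤ c₀ λ^{−p}. Then for every λ ≥ 1, P(∑_{j=1}^m a_j^q |Ẑ_j|^q ≥ C λ^q) ≤ λ^{−p}. -/

import Mathlib

open MeasureTheory Finset

private lemma npow_rpow_comm (x : ℝ) (hx : 0 ≤ x) (n : ℕ) (y : ℝ) :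
    ((x ^ n : ℝ)) ^ y = (x ^ y) ^ n := by
  rw [← Real.rpow_natCast x n, ← Real.rpow_mul hx, mul_comm, Real.rpow_mul hx, Real.rpow_natCast]

private lemma two_rpow_sub_one (x : ℝ) (hx : 0 ≤ x) : x / 2 ≤ (2:ℝ) ^ x - 1 := by
  have h1 := Real.add_one_le_exp (Real.log 2 * x)
  have h2 : (2:ℝ) ^ x = Real.exp (Real.log 2 * x) := by
    rw [Real.rpow_def_of_pos two_pos]
  have h3 := Real.log_two_gt_d9
  nlinarith

private lemma level_exists {lam x : ℝ} (hlam : 1 ≤ lam) (hx : lam ≤ x) :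
    ∃ k : ℕ, (2:ℝ) ^ k * lam ≤ x ∧ x ≤ (2:ℝ) ^ (k + 1) * lam := by
  have hlam0 : (0:ℝ) < lam := by linarith
  have hxl : 1 ≤ x / lam := (one_le_div hlam0).2 hx
  set y := Real.logb 2 (x / lam) with hy
  have hy0 : 0 ≤ y := Real.logb_nonneg one_lt_two hxl
  refine ⟨⌊y⌋₊, ?_, ?_⟩
  · have h1 : (2:ℝ) ^ (⌊y⌋₊ : ℝ) ≤ (2:ℝ) ^ y :=
      Real.rpow_le_rpow_of_exponent_le one_le_two (Nat.floor_le hy0)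
    rw [Real.rpow_natCast, Real.rpow_logb two_pos (by norm_num) (by positivity)] at h1
    rw [← le_div_iff₀ hlam0]  -- 2^k ≤ x / lam
    exact h1
  · have h1 : (2:ℝ) ^ y ≤ (2:ℝ) ^ ((⌊y⌋₊ : ℝ) + 1) :=
      Real.rpow_le_rpow_of_exponent_le one_le_two (Nat.lt_floor_add_one y).le
    rw [Real.rpow_logb two_pos (by norm_num) (by positivity)] at h1
    have h2 : (2:ℝ) ^ ((⌊y⌋₊ : ℝ) + 1) = (2:ℝ) ^ (⌊y⌋₊ + 1) := by
      rw [← Real.rpow_natCast 2 (⌊y⌋₊ + 1)]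
      push_cast
      ring_nf
    rw [h2] at h1
    rw [← div_le_iff₀ hlam0]
    exact h1

private lemma geom_bound {r : ℝ} (hr : 1 < r) (N : ℕ) :
    ∑ k ∈ Finset.range N, r ^ k ≤ r ^ N / (r - 1) := by
  rw [geom_sum_eq hr.ne' N]
  have h1 : 0 < r - 1 := by linarith
  have h2 : r ^ N - 1 ≤ r ^ N := by linarith
  gcongr

set_option maxHeartbeats 1000000 in
theorem stmt_8 (c₀ c : ℝ) (hc₀ : 0 < c₀) (hc : 0 < c) :
    ∃ C : ℝ, 0 < C ∧
      ∀ p q : ℝ, 1 ≤ p → p < q → q ≤ 2 → c ≤ q - p →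
        ∀ (m : ℕ) (Ω : Type) [MeasurableSpace Ω] (μ : Measure Ω), IsProbabilityMeasure μ →
          ∀ (a : Fin m → ℝ) (Zh : Fin m → Ω → ℝ),
            (∀ j, 0 ≤ a j) → (∑ j, a j ^ p) ≤ 1 →
            (∀ j, Measurable (Zh j)) →
            (∀ j, ∀ lam : ℝ, 1 ≤ lam →
              μ {ω | lam ≤ |Zh j ω|} ≤ ENNReal.ofReal (c₀ * lam ^ (-p))) →
            ∀ lam : ℝ, 1 ≤ lam →
              μ {ω | C * lam ^ q ≤ ∑ j, a j ^ q * |Zh j ω| ^ q}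
                ≤ ENNReal.ofReal (lam ^ (-p)) := by
  classical
  set K : ℝ := max 1 (2 * c₀) with hKdef
  have hK1 : (1:ℝ) ≤ K := le_max_left _ _
  have hK2c : 2 * c₀ ≤ K := le_max_right _ _
  have hK0 : (0:ℝ) < K := by linarith
  set D : ℝ := 16 * c₀ * K / c with hDdef
  have hD0 : (0:ℝ) < D := by positivity
  refine ⟨1 + 2 * D, by positivity, ?_⟩
  intro p q hp hpq hq2 hcqp m Ω _ μ hμ a Zh ha hsum hmeas htail lam hlam
  have hp0 : (0:ℝ) < p := lt_of_lt_of_le one_pos hp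
  have hq0 : (0:ℝ) < q := lt_trans hp0 hpq
  have hqp : (0:ℝ) < q - p := sub_pos.2 hpq
  have hqp1 : q - p ≤ 1 := by linarith
  have hlam0 : (0:ℝ) < lam := lt_of_lt_of_le one_pos hlam
  have hlamq : (0:ℝ) < lam ^ q := Real.rpow_pos_of_pos hlam0 q
  -- each a j ≤ 1
  have haj1 : ∀ j, a j ≤ 1 := by
    intro j
    by_contra h
    push_neg at h
    have h1 : (1:ℝ) < a j ^ p :=
      (Real.one_lt_rpow_iff (ha j)).2 (Or.inl ⟨h, hp0⟩)
    have h2 : a j ^ p ≤ ∑ j', a j' ^ p :=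
      Finset.single_le_sum (fun i _ => Real.rpow_nonneg (ha i) p) (Finset.mem_univ j)
    linarith
  have haqp : ∀ j, a j ^ q ≤ a j ^ p := by
    intro j
    rcases eq_or_lt_of_le (ha j) with h0 | h0
    · rw [← h0, Real.zero_rpow hq0.ne', Real.zero_rpow hp0.ne']
    · exact Real.rpow_le_rpow_of_exponent_ge h0 (haj1 j) hpq.le
  have hKp : 2 * c₀ ≤ K ^ p := by
    have h1 : K ^ (1:ℝ) ≤ K ^ p := Real.rpow_le_rpow_of_exponent_le hK1 hp
    rw [Real.rpow_one] at h1; linarith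
  have hKp0 : (0:ℝ) < K ^ p := Real.rpow_pos_of_pos hK0 p
  -- truncated real and ennreal summands
  set rr : Fin m → Ω → ℝ := fun j ω =>
    if lam ≤ |Zh j ω| ∧ a j * |Zh j ω| ≤ K * lam then a j ^ q * |Zh j ω| ^ q else 0
    with hrr
  have hrr0 : ∀ j ω, 0 ≤ rr j ω := by
    intro j ω
    simp only [hrr]
    split_ifs
    · exact mul_nonneg (Real.rpow_nonneg (ha j) q) (Real.rpow_nonneg (abs_nonneg _) q)
    · exact le_refl 0
  set g : Fin m → Ω → ENNReal := fun j =>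
    Set.indicator {ω | lam ≤ |Zh j ω| ∧ a j * |Zh j ω| ≤ K * lam}
      (fun ω => ENNReal.ofReal (a j ^ q * |Zh j ω| ^ q)) with hgdef
  have hmset : ∀ j, MeasurableSet {ω | lam ≤ |Zh j ω| ∧ a j * |Zh j ω| ≤ K * lam} := by
    intro j
    have hza : Measurable fun ω => |Zh j ω| := (hmeas j).abs
    exact (measurableSet_le measurable_const hza).inter
      (measurableSet_le (hza.const_mul (a j)) measurable_const)
  have hmg : ∀ j, Measurable (g j) := by
    intro j
    exact Measurable.indicator (by fun_prop) (hmset j)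
  have hgr : ∀ j ω, g j ω = ENNReal.ofReal (rr j ω) := by
    intro j ω
    simp only [hgdef, hrr, Set.indicator_apply, Set.mem_setOf_eq]
    split_ifs
    · rfl
    · exact ENNReal.ofReal_zero.symm
  -- the big event
  set E : Set Ω := ⋃ j, {ω | K * lam ≤ a j * |Zh j ω|} with hEdef
  -- Step A: set inclusion
  have hsub : {ω | (1 + 2 * D) * lam ^ q ≤ ∑ j, a j ^ q * |Zh j ω| ^ q}
      ⊆ E ∪ {ω | ENNReal.ofReal (2 * D * lam ^ q) ≤ ∑ j, g j ω} := by
    intro ω hω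
    simp only [Set.mem_setOf_eq] at hω
    by_cases hEm : ω ∈ E
    · exact Or.inl hEm
    · right
      simp only [hEdef, Set.mem_iUnion, Set.mem_setOf_eq, not_exists, not_le] at hEm
      have hterm : ∀ j, a j ^ q * |Zh j ω| ^ q ≤ a j ^ p * lam ^ q + rr j ω := by
        intro j
        by_cases hj : lam ≤ |Zh j ω|
        · have hcond : lam ≤ |Zh j ω| ∧ a j * |Zh j ω| ≤ K * lam := ⟨hj, (hEm j).le⟩
          have h1 : rr j ω = a j ^ q * |Zh j ω| ^ q := by simp only [hrr, if_pos hcond]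
          have h2 : 0 ≤ a j ^ p * lam ^ q :=
            mul_nonneg (Real.rpow_nonneg (ha j) p) hlamq.le
          linarith
        · push_neg at hj
          have h1 : |Zh j ω| ^ q ≤ lam ^ q :=
            Real.rpow_le_rpow (abs_nonneg _) hj.le hq0.le
          have h2 : a j ^ q * |Zh j ω| ^ q ≤ a j ^ p * lam ^ q :=
            mul_le_mul (haqp j) h1 (Real.rpow_nonneg (abs_nonneg _) q)
              (Real.rpow_nonneg (ha j) p)
          have h3 := hrr0 j ω
          linarith
      have hS : (1 + 2 * D) * lam ^ q ≤ (∑ j, a j ^ p * lam ^ q) + ∑ j, rr j ω := by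
        calc (1 + 2 * D) * lam ^ q ≤ ∑ j, a j ^ q * |Zh j ω| ^ q := hω
          _ ≤ ∑ j, (a j ^ p * lam ^ q + rr j ω) := Finset.sum_le_sum fun j _ => hterm j
          _ = (∑ j, a j ^ p * lam ^ q) + ∑ j, rr j ω := Finset.sum_add_distrib
      have h4 : (∑ j, a j ^ p * lam ^ q) ≤ lam ^ q := by
        rw [← Finset.sum_mul]
        nlinarith [hsum, hlamq]
      have h5 : 2 * D * lam ^ q ≤ ∑ j, rr j ω := by nlinarith [hS, h4]
      simp only [Set.mem_setOf_eq]
      calc ENNReal.ofReal (2 * D * lam ^ q) ≤ ENNReal.ofReal (∑ j, rr j ω) :=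
            ENNReal.ofReal_le_ofReal h5
        _ = ∑ j, ENNReal.ofReal (rr j ω) :=
            ENNReal.ofReal_sum_of_nonneg fun j _ => hrr0 j ω
        _ = ∑ j, g j ω := by simp only [hgr]
  -- Step B: bound on μ E
  have hEj : ∀ j, μ {ω | K * lam ≤ a j * |Zh j ω|}
      ≤ ENNReal.ofReal (c₀ * (K * lam) ^ (-p) * a j ^ p) := by
    intro j
    rcases eq_or_lt_of_le (ha j) with h0 | h0
    · have hempty : {ω | K * lam ≤ a j * |Zh j ω|} = ∅ := by
        ext ω
        simp only [Set.mem_setOf_eq, ← h0, zero_mul, Set.mem_empty_iff_false, iff_false, not_le]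
        positivity
      rw [hempty]
      simp
    · have hkla : 1 ≤ K * lam / a j := by
        rw [le_div_iff₀ h0, one_mul]
        nlinarith [haj1 j, hK1, hlam]
      have hset : {ω | K * lam ≤ a j * |Zh j ω|} = {ω | K * lam / a j ≤ |Zh j ω|} := by
        ext ω
        simp only [Set.mem_setOf_eq]
        rw [div_le_iff₀ h0, mul_comm (|Zh j ω|) (a j)]
      rw [hset]
      refine (htail j _ hkla).trans (ENNReal.ofReal_le_ofReal (le_of_eq ?_))
      rw [Real.div_rpow (by positivity) (ha j), Real.rpow_neg (ha j) p]
      field_simp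
  have hEbound : μ E ≤ ENNReal.ofReal (1 / 2 * lam ^ (-p)) := by
    have hhalf : c₀ * (K * lam) ^ (-p) * (∑ j, a j ^ p) ≤ 1 / 2 * lam ^ (-p) := by
      have h1 : (K * lam) ^ (-p) = K ^ (-p) * lam ^ (-p) :=
        Real.mul_rpow hK0.le hlam0.le
      have h2 : K ^ (-p) = (K ^ p)⁻¹ := Real.rpow_neg hK0.le p
      have h3 : 0 < lam ^ (-p) := Real.rpow_pos_of_pos hlam0 _
      have h4 : c₀ * (K ^ p)⁻¹ ≤ 1 / 2 := by
        rw [mul_inv_le_iff₀ hKp0]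
        nlinarith
      have h5 : 0 ≤ c₀ * (K * lam) ^ (-p) := by positivity
      have hsum0 : 0 ≤ ∑ j, a j ^ p :=
        Finset.sum_nonneg fun j _ => Real.rpow_nonneg (ha j) p
      calc c₀ * (K * lam) ^ (-p) * (∑ j, a j ^ p) ≤ c₀ * (K * lam) ^ (-p) * 1 := by
            exact mul_le_mul_of_nonneg_left hsum h5
        _ = c₀ * (K ^ p)⁻¹ * lam ^ (-p) := by rw [h1, h2]; ring
        _ ≤ 1 / 2 * lam ^ (-p) := mul_le_mul_of_nonneg_right h4 h3.le
    calc μ E ≤ ∑' j, μ {ω | K * lam ≤ a j * |Zh j ω|} := measure_iUnion_le _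
      _ = ∑ j, μ {ω | K * lam ≤ a j * |Zh j ω|} := tsum_fintype _
      _ ≤ ∑ j, ENNReal.ofReal (c₀ * (K * lam) ^ (-p) * a j ^ p) :=
          Finset.sum_le_sum fun j _ => hEj j
      _ = ENNReal.ofReal (∑ j, c₀ * (K * lam) ^ (-p) * a j ^ p) := by
          rw [ENNReal.ofReal_sum_of_nonneg]
          intro j _
          have := Real.rpow_nonneg (ha j) p
          positivity
      _ ≤ ENNReal.ofReal (1 / 2 * lam ^ (-p)) := by
          apply ENNReal.ofReal_le_ofReal
          calc (∑ j, c₀ * (K * lam) ^ (-p) * a j ^ p)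
              = c₀ * (K * lam) ^ (-p) * (∑ j, a j ^ p) := by rw [Finset.mul_sum]
            _ ≤ 1 / 2 * lam ^ (-p) := hhalf
  -- Step C: lintegral bound for each g j
  have hgint : ∀ j, ∫⁻ ω, g j ω ∂μ ≤ ENNReal.ofReal (D * lam ^ (q - p) * a j ^ p) := by
    intro j
    rcases eq_or_lt_of_le (ha j) with h0 | h0
    · have hz : ∀ ω, g j ω = 0 := by
        intro ω
        simp only [hgdef, Set.indicator_apply]
        split_ifs
        · rw [← h0, Real.zero_rpow hq0.ne', zero_mul, ENNReal.ofReal_zero]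
        · rfl
      simp only [hz, lintegral_zero]
      exact zero_le
    · -- a j > 0
      obtain ⟨N, hN⟩ := pow_unbounded_of_one_lt (K / a j) (one_lt_two (α := ℝ))
      have hPex : ∃ n : ℕ, K / a j < (2:ℝ) ^ n := ⟨N, hN⟩
      set N₀ := Nat.find hPex with hN₀def
      have hN₀ : K / a j < (2:ℝ) ^ N₀ := Nat.find_spec hPex
      have hKa1 : 1 ≤ K / a j := by
        rw [le_div_iff₀ h0, one_mul]
        linarith [haj1 j]
      have hN₀pos : 0 < N₀ := by
        rcases Nat.eq_zero_or_pos N₀ with h | h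
        · exfalso
          rw [h] at hN₀
          simp at hN₀
          linarith
        · exact h
      have hN₀min : (2:ℝ) ^ (N₀ - 1) ≤ K / a j := by
        have h1 := Nat.find_min hPex (Nat.sub_lt hN₀pos one_pos)
        push_neg at h1
        exact h1
      -- level functions
      set h : ℕ → Ω → ENNReal := fun k =>
        Set.indicator {ω | (2:ℝ) ^ k * lam ≤ |Zh j ω|}
          (fun _ => ENNReal.ofReal (a j ^ q * ((2:ℝ) ^ (k + 1) * lam) ^ q)) with hhdef
      have hlevset : ∀ k : ℕ, MeasurableSet {ω | (2:ℝ) ^ k * lam ≤ |Zh j ω|} :=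
        fun k => measurableSet_le measurable_const (hmeas j).abs
      have hmh : ∀ k, Measurable (h k) :=
        fun k => Measurable.indicator measurable_const (hlevset k)
      -- pointwise bound
      have hpt : ∀ ω, g j ω ≤ ∑ k ∈ Finset.range N₀, h k ω := by
        intro ω
        simp only [hgdef, Set.indicator_apply, Set.mem_setOf_eq]
        split_ifs with hcond
        · obtain ⟨hx1, hx2⟩ := hcond
          obtain ⟨k, hk1, hk2⟩ := level_exists hlam hx1
          have hak : a j * 2 ^ k ≤ K := by
            have h1 : a j * ((2:ℝ) ^ k * lam) ≤ a j * |Zh j ω| :=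
              mul_le_mul_of_nonneg_left hk1 h0.le
            have h2 : (a j * 2 ^ k) * lam ≤ K * lam := by nlinarith
            exact le_of_mul_le_mul_right h2 hlam0
          have hkN : k < N₀ := by
            have h1 : (2:ℝ) ^ k ≤ K / a j := by
              rw [le_div_iff₀ h0]
              nlinarith
            have h2 : (2:ℝ) ^ k < 2 ^ N₀ := lt_of_le_of_lt h1 hN₀
            exact (pow_lt_pow_iff_right₀ one_lt_two).1 h2
          have hle : ENNReal.ofReal (a j ^ q * |Zh j ω| ^ q) ≤ h k ω := by
            have hmem : ω ∈ {ω | (2:ℝ) ^ k * lam ≤ |Zh j ω|} := hk1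
            simp only [hhdef, Set.indicator_of_mem hmem]
            apply ENNReal.ofReal_le_ofReal
            exact mul_le_mul_of_nonneg_left
              (Real.rpow_le_rpow (abs_nonneg _) hk2 hq0.le) (Real.rpow_nonneg (ha j) q)
          exact hle.trans (Finset.single_le_sum (f := fun k => h k ω)
            (fun i _ => zero_le) (Finset.mem_range.2 hkN))
        · exact zero_le
      -- real-valued per-level bound
      set t : ℕ → ℝ := fun k =>
        a j ^ q * ((2:ℝ) ^ (k + 1) * lam) ^ q * (c₀ * ((2:ℝ) ^ k * lam) ^ (-p)) with htdef
      have hintk : ∀ k, ∫⁻ ω, h k ω ∂μ ≤ ENNReal.ofReal (t k) := by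
        intro k
        have hlev1 : 1 ≤ (2:ℝ) ^ k * lam := by
          have h2k : (1:ℝ) ≤ 2 ^ k := one_le_pow₀ one_le_two
          nlinarith
        have hc1 : 0 ≤ a j ^ q * ((2:ℝ) ^ (k + 1) * lam) ^ q :=
          mul_nonneg (Real.rpow_nonneg (ha j) q) (Real.rpow_nonneg (by positivity) q)
        calc ∫⁻ ω, h k ω ∂μ
            = ENNReal.ofReal (a j ^ q * ((2:ℝ) ^ (k + 1) * lam) ^ q)
              * μ {ω | (2:ℝ) ^ k * lam ≤ |Zh j ω|} := by
              rw [hhdef]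
              rw [lintegral_indicator (hlevset k), setLIntegral_const]
          _ ≤ ENNReal.ofReal (a j ^ q * ((2:ℝ) ^ (k + 1) * lam) ^ q)
              * ENNReal.ofReal (c₀ * ((2:ℝ) ^ k * lam) ^ (-p)) :=
              mul_le_mul_right (htail j _ hlev1) _
          _ = ENNReal.ofReal (t k) := by
              rw [← ENNReal.ofReal_mul hc1]
      -- geometric bound on the real sum
      set r : ℝ := (2:ℝ) ^ (q - p) with hrdef
      have hr1 : 1 < r :=
        (Real.one_lt_rpow_iff (by norm_num : (0:ℝ) ≤ 2)).2 (Or.inl ⟨one_lt_two, hqp⟩)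
      have hr2 : r ≤ 2 := by
        have h1 := Real.rpow_le_rpow_of_exponent_le one_le_two hqp1
        rwa [Real.rpow_one] at h1
      have h24 : (2:ℝ) ^ q ≤ 4 := by
        have h1 := Real.rpow_le_rpow_of_exponent_le one_le_two hq2
        have h2 : (2:ℝ) ^ (2:ℝ) = 4 := by
          rw [show (2:ℝ) = ((2:ℕ):ℝ) by norm_num, Real.rpow_natCast]
          norm_num
        linarith
      have hterm : ∀ k, t k ≤ 4 * c₀ * a j ^ q * lam ^ (q - p) * r ^ k := by
        intro k
        have e1 : ((2:ℝ) ^ (k + 1) * lam) ^ q = ((2:ℝ) ^ q) ^ (k + 1) * lam ^ q := by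
          rw [Real.mul_rpow (by positivity) hlam0.le, npow_rpow_comm 2 (by norm_num)]
        have e2 : ((2:ℝ) ^ k * lam) ^ (-p) = ((2:ℝ) ^ (-p)) ^ k * lam ^ (-p) := by
          rw [Real.mul_rpow (by positivity) hlam0.le, npow_rpow_comm 2 (by norm_num)]
        have e3 : ((2:ℝ) ^ q) ^ k * ((2:ℝ) ^ (-p)) ^ k = r ^ k := by
          rw [← mul_pow, ← Real.rpow_add two_pos, hrdef]
          ring_nf
        have e4 : lam ^ q * lam ^ (-p) = lam ^ (q - p) := by
          rw [← Real.rpow_add hlam0]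
          ring_nf
        have estep : t k = c₀ * (2:ℝ) ^ q * a j ^ q
            * (((2:ℝ) ^ q) ^ k * ((2:ℝ) ^ (-p)) ^ k) * (lam ^ q * lam ^ (-p)) := by
          rw [htdef]
          simp only
          rw [e1, e2, pow_succ]
          ring
        have hw : (0:ℝ) ≤ c₀ * a j ^ q * r ^ k * lam ^ (q - p) :=
          mul_nonneg (mul_nonneg (mul_nonneg hc₀.le (Real.rpow_nonneg (ha j) q))
            (pow_nonneg (by linarith) k)) (Real.rpow_nonneg hlam0.le _)
        rw [estep, e3, e4]
        nlinarith [hw, h24]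
      have hrpos : (0:ℝ) < r - 1 := by linarith
      have hB0 : (0:ℝ) ≤ (K / a j) ^ (q - p) := Real.rpow_nonneg (by positivity) _
      have hrN : r ^ (N₀ - 1) ≤ (K / a j) ^ (q - p) := by
        have h1 : r ^ (N₀ - 1) = ((2:ℝ) ^ (N₀ - 1)) ^ (q - p) :=
          (npow_rpow_comm 2 (by norm_num) (N₀ - 1) (q - p)).symm
        rw [h1]
        exact Real.rpow_le_rpow (by positivity) hN₀min hqp.le
      have hrN2 : r ^ N₀ ≤ 2 * (K / a j) ^ (q - p) := by
        have h1 : r ^ N₀ = r ^ (N₀ - 1) * r := by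
          conv_lhs => rw [← Nat.succ_pred_eq_of_pos hN₀pos]
          rw [pow_succ, Nat.pred_eq_sub_one]
        rw [h1]
        nlinarith [hrN, hr2, hB0, hr1]
      have hrc : c / 2 ≤ r - 1 := by
        have h1 := two_rpow_sub_one (q - p) hqp.le
        rw [← hrdef] at h1
        linarith
      have hdiv : r ^ N₀ / (r - 1) ≤ 2 * (K / a j) ^ (q - p) * (2 / c) := by
        rw [div_le_iff₀ hrpos]
        have h2 : 1 ≤ 2 / c * (r - 1) := by
          have h3 : 2 / c * (c / 2) = 1 := by field_simp
          have h4 : (0:ℝ) ≤ 2 / c := by positivity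
          nlinarith [hrc]
        nlinarith [hB0, h2, hrN2]
      have hprod : a j ^ q * (K / a j) ^ (q - p) = K ^ (q - p) * a j ^ p := by
        have e : a j ^ q / a j ^ (q - p) = a j ^ p := by
          rw [← Real.rpow_sub h0, show q - (q - p) = p by ring]
        rw [Real.div_rpow hK0.le (ha j), ← e]
        ring
      have hKqp : K ^ (q - p) ≤ K := by
        have h1 := Real.rpow_le_rpow_of_exponent_le hK1 hqp1
        rwa [Real.rpow_one] at h1
      have hsumt : ∑ k ∈ Finset.range N₀, t k ≤ D * lam ^ (q - p) * a j ^ p := by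
        have hu0 : (0:ℝ) ≤ 4 * c₀ * a j ^ q * lam ^ (q - p) :=
          mul_nonneg (mul_nonneg (by positivity) (Real.rpow_nonneg (ha j) q))
            (Real.rpow_nonneg hlam0.le _)
        calc ∑ k ∈ Finset.range N₀, t k
            ≤ ∑ k ∈ Finset.range N₀, 4 * c₀ * a j ^ q * lam ^ (q - p) * r ^ k :=
              Finset.sum_le_sum fun k _ => hterm k
          _ = 4 * c₀ * a j ^ q * lam ^ (q - p) * ∑ k ∈ Finset.range N₀, r ^ k := by
              rw [Finset.mul_sum]
          _ ≤ 4 * c₀ * a j ^ q * lam ^ (q - p) * (r ^ N₀ / (r - 1)) :=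
              mul_le_mul_of_nonneg_left (geom_bound hr1 N₀) hu0
          _ ≤ 4 * c₀ * a j ^ q * lam ^ (q - p) * (2 * (K / a j) ^ (q - p) * (2 / c)) :=
              mul_le_mul_of_nonneg_left hdiv hu0
          _ = 16 * c₀ / c * lam ^ (q - p) * (a j ^ q * (K / a j) ^ (q - p)) := by
              field_simp
              ring
          _ = 16 * c₀ / c * lam ^ (q - p) * (K ^ (q - p) * a j ^ p) := by rw [hprod]
          _ ≤ 16 * c₀ / c * lam ^ (q - p) * (K * a j ^ p) := by
              have hnn : (0:ℝ) ≤ 16 * c₀ / c * lam ^ (q - p) :=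
                mul_nonneg (by positivity) (Real.rpow_nonneg hlam0.le _)
              exact mul_le_mul_of_nonneg_left
                (mul_le_mul_of_nonneg_right hKqp (Real.rpow_nonneg (ha j) p)) hnn
          _ = D * lam ^ (q - p) * a j ^ p := by
              rw [hDdef]
              ring
      have ht0 : ∀ k, 0 ≤ t k := by
        intro k
        have h1 : 0 ≤ a j ^ q * ((2:ℝ) ^ (k+1) * lam) ^ q :=
          mul_nonneg (Real.rpow_nonneg (ha j) q) (Real.rpow_nonneg (by positivity) q)
        have h2 : 0 ≤ c₀ * ((2:ℝ) ^ k * lam) ^ (-p) :=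
          mul_nonneg hc₀.le (Real.rpow_nonneg (by positivity) _)
        exact mul_nonneg h1 h2
      calc ∫⁻ ω, g j ω ∂μ ≤ ∫⁻ ω, ∑ k ∈ Finset.range N₀, h k ω ∂μ := lintegral_mono hpt
        _ = ∑ k ∈ Finset.range N₀, ∫⁻ ω, h k ω ∂μ :=
            lintegral_finset_sum _ fun k _ => hmh k
        _ ≤ ∑ k ∈ Finset.range N₀, ENNReal.ofReal (t k) :=
            Finset.sum_le_sum fun k _ => hintk k
        _ = ENNReal.ofReal (∑ k ∈ Finset.range N₀, t k) :=
            (ENNReal.ofReal_sum_of_nonneg fun k _ => ht0 k).symm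
        _ ≤ ENNReal.ofReal (D * lam ^ (q - p) * a j ^ p) :=
            ENNReal.ofReal_le_ofReal hsumt
  -- Step D: Markov and conclusion
  have hmsum : Measurable fun ω => ∑ j, g j ω :=
    Finset.measurable_sum Finset.univ fun j _ => hmg j
  have hint : ∫⁻ ω, (∑ j, g j ω) ∂μ ≤ ENNReal.ofReal (D * lam ^ (q - p)) := by
    rw [lintegral_finset_sum _ fun j _ => hmg j]
    calc ∑ j, ∫⁻ ω, g j ω ∂μ
        ≤ ∑ j, ENNReal.ofReal (D * lam ^ (q - p) * a j ^ p) :=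
          Finset.sum_le_sum fun j _ => hgint j
      _ = ENNReal.ofReal (∑ j, D * lam ^ (q - p) * a j ^ p) := by
          rw [ENNReal.ofReal_sum_of_nonneg]
          intro j _
          exact mul_nonneg (mul_nonneg hD0.le (Real.rpow_nonneg hlam0.le _))
            (Real.rpow_nonneg (ha j) p)
      _ ≤ ENNReal.ofReal (D * lam ^ (q - p)) := by
          apply ENNReal.ofReal_le_ofReal
          have h1 : (∑ j, D * lam ^ (q - p) * a j ^ p)
              = D * lam ^ (q - p) * ∑ j, a j ^ p := by rw [Finset.mul_sum]
          have h2 : (0:ℝ) ≤ D * lam ^ (q - p) :=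
            mul_nonneg hD0.le (Real.rpow_nonneg hlam0.le _)
          rw [h1]
          nlinarith [hsum, h2]
  have hlamqp : (0:ℝ) < 2 * D * lam ^ q := by positivity
  have hmarkov : μ {ω | ENNReal.ofReal (2 * D * lam ^ q) ≤ ∑ j, g j ω}
      ≤ ENNReal.ofReal (1 / 2 * lam ^ (-p)) := by
    have hne0 : ENNReal.ofReal (2 * D * lam ^ q) ≠ 0 :=
      (ENNReal.ofReal_pos.2 hlamqp).ne'
    calc μ {ω | ENNReal.ofReal (2 * D * lam ^ q) ≤ ∑ j, g j ω}
        ≤ (∫⁻ ω, (∑ j, g j ω) ∂μ) / ENNReal.ofReal (2 * D * lam ^ q) :=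
          meas_ge_le_lintegral_div hmsum.aemeasurable hne0 ENNReal.ofReal_ne_top
      _ ≤ ENNReal.ofReal (D * lam ^ (q - p)) / ENNReal.ofReal (2 * D * lam ^ q) :=
          ENNReal.div_le_div_right hint _
      _ = ENNReal.ofReal (D * lam ^ (q - p) / (2 * D * lam ^ q)) :=
          (ENNReal.ofReal_div_of_pos hlamqp).symm
      _ = ENNReal.ofReal (1 / 2 * lam ^ (-p)) := by
          congr 1
          have e1 : lam ^ (q - p) = lam ^ q * lam ^ (-p) := by
            rw [← Real.rpow_add hlam0]
            ring_nf
          rw [e1]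
          field_simp
  calc μ {ω | (1 + 2 * D) * lam ^ q ≤ ∑ j, a j ^ q * |Zh j ω| ^ q}
      ≤ μ (E ∪ {ω | ENNReal.ofReal (2 * D * lam ^ q) ≤ ∑ j, g j ω}) :=
        measure_mono hsub
    _ ≤ μ E + μ {ω | ENNReal.ofReal (2 * D * lam ^ q) ≤ ∑ j, g j ω} :=
        measure_union_le _ _
    _ ≤ ENNReal.ofReal (1 / 2 * lam ^ (-p)) + ENNReal.ofReal (1 / 2 * lam ^ (-p)) :=
        add_le_add hEbound hmarkov
    _ = ENNReal.ofReal (lam ^ (-p)) := by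
        rw [← ENNReal.ofReal_add (by positivity) (by positivity)]
        congr 1
        ring
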